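/- Let n ≥ 1, ρ > 0, and let q ∈ C^∞(ℝ × ℝⁿ) be supported in ℝ × B̄(0,ρ) with all derivatives bounded. Let a_j, j = 0, 1, 2, …, be defined by the recursion a_0(t,x,ω) = −(1/2) ∫_{−∞}^0 q(t+τ, x+τω) dτ, a_j(t,x,ω) = −(1/2) ∫_{−∞}^0 [(∂_t² − Δ_x + q) a_{j−1}](t+τ, x+τω, ω) dτ. Then for every j ≥ 0, every t ∈ ℝ, every ω ∈ S^{n−1}, and every x ∈ ℝⁿ: a_j(t,x,ω) = 0 whenever x·ω < −ρ, and also a_j(t,x,ω) = 0 whenever |x − (x·ω)ω| > ρ. -/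

import Mathlib

open MeasureTheory Finset

noncomputable section

abbrev Euc (n : ℕ) := EuclideanSpace ℝ (Fin n)

variable {n : ℕ}

/-- Partial derivative in the `i`-th coordinate direction. -/
def pd {F : Type*} [NormedAddCommGroup F] [NormedSpace ℝ F]
    (i : Fin n) (g : Euc n → F) : Euc n → F :=
  fun x => fderiv ℝ g x (EuclideanSpace.single i 1)

/-- Multi-index partial derivative `D^γ`. -/
def mderiv {F : Type*} [NormedAddCommGroup F] [NormedSpace ℝ F]
    (γ : Fin n → ℕ) (g : Euc n → F) : Euc n → F :=
  ((List.ofFn (fun i : Fin n => (fun h : Euc n → F => (pd i)^[γ i] h))).foldr (· ∘ ·) id) g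

/-- The (finite) set of multi-indices `γ` with `|γ| ≤ m`. -/
def midx (n m : ℕ) : Finset (Fin n → Fin (m + 1)) :=
  Finset.univ.filter (fun γ => ∑ i, (γ i : ℕ) ≤ m)

/-- The `C^m(K)` norm: `∑_{|γ| ≤ m} sup_{x ∈ K} |D^γ g(x)|`. -/
def CnormOn {F : Type*} [NormedAddCommGroup F] [NormedSpace ℝ F]
    (m : ℕ) (K : Set (Euc n)) (g : Euc n → F) : ℝ :=
  ∑ γ ∈ midx n m, ⨆ x ∈ K, ‖mderiv (fun i => (γ i : ℕ)) g x‖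

/-- Parametrization of the hyperplane `ω^⊥` by Euclidean space of the matching dimension,
via an orthonormal basis; this identification is measure preserving. -/
def perpEmb (ω : Euc n) :
    EuclideanSpace ℝ (Fin (Module.finrank ℝ ((Submodule.span ℝ {ω})ᗮ : Submodule ℝ (Euc n)))) →
      Euc n :=
  fun y => ((stdOrthonormalBasis ℝ ((Submodule.span ℝ {ω})ᗮ : Submodule ℝ (Euc n))).repr.symm y :
    Euc n)

/-- The weighted Radon transform `R_μ f(p,ω) = ∫_{ω^⊥} μ(pω + y, ω) f(pω + y) dy`,
the integral over the hyperplane `{x : x·ω = p}` with respect to the `(n-1)`-dimensional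
Lebesgue measure on `ω^⊥`. -/
def Rw (μ : Euc n → Euc n → ℂ) (f : Euc n → ℂ) (p : ℝ) (ω : Euc n) : ℂ :=
  ∫ y, μ (p • ω + perpEmb ω y) ω * f (p • ω + perpEmb ω y)

/-- The `L²(S^{n-1}; H^L(ℝ))` norm of a function `G(p, ω)`. -/
def L2H (L : ℕ) (G : ℝ → Metric.sphere (0 : Euc n) 1 → ℂ) : ℝ :=
  Real.sqrt (∫ ω, (∑ l ∈ Finset.range (L + 1),
    ∫ p : ℝ, ‖iteratedDeriv l (fun p' => G p' ω) p‖ ^ 2)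
      ∂((volume : Measure (Euc n)).toSphere))

/-- The wave operator with potential, `(∂_t² - Δ_x + q)a`, acting on `a(t,x,ω)` in `(t,x)`. -/
def waveOp (q : ℝ → Euc n → ℝ) (a : ℝ → Euc n → Euc n → ℝ) : ℝ → Euc n → Euc n → ℝ :=
  fun t x ω => iteratedDeriv 2 (fun s => a s x ω) t
    - (∑ i, pd i (pd i (fun y => a t y ω)) x) + q t x * a t x ω

/-- The amplitudes `a_j` of the progressive wave expansion:
`a_0(t,x,ω) = -(1/2)∫_{-∞}^0 q(t+τ, x+τω) dτ` and
`a_j(t,x,ω) = -(1/2) ∫_{-∞}^0 [(∂_t² - Δ + q) a_{j-1}](t+τ, x+τω, ω) dτ`. -/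
def aSeq (q : ℝ → Euc n → ℝ) : ℕ → ℝ → Euc n → Euc n → ℝ
  | 0 => fun t x ω => (-(1 : ℝ) / 2) * ∫ τ in Set.Iic (0 : ℝ), q (t + τ) (x + τ • ω)
  | (j + 1) => fun t x ω => (-(1 : ℝ) / 2) *
      ∫ τ in Set.Iic (0 : ℝ), waveOp q (aSeq q j) (t + τ) (x + τ • ω) ω

/-- Time derivative operator on functions of `(t,x)`. -/
def tD (g : ℝ → Euc n → ℝ) : ℝ → Euc n → ℝ := fun t x => deriv (fun s => g s x) t

/-- Spatial partial derivative operator on functions of `(t,x)`. -/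
def xD (i : Fin n) (g : ℝ → Euc n → ℝ) : ℝ → Euc n → ℝ :=
  fun t x => fderiv ℝ (g t) x (EuclideanSpace.single i 1)

/-- Mixed multi-index derivative `∂_t^{γ₀} D_x^γ` on functions of `(t,x)`. -/
def mderivTX (γ0 : ℕ) (γ : Fin n → ℕ) (g : ℝ → Euc n → ℝ) : ℝ → Euc n → ℝ :=
  ((List.ofFn (fun i : Fin n => fun h : ℝ → Euc n → ℝ => (xD i)^[γ i] h)).foldr (· ∘ ·) id)
    (tD^[γ0] g)

/-- Multi-indices in the variables `(t,x)` of total order at most `m`. -/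
def midxTX (n m : ℕ) : Finset (Fin (m + 1) × (Fin n → Fin (m + 1))) :=
  Finset.univ.filter (fun p => (p.1 : ℕ) + ∑ i, (p.2 i : ℕ) ≤ m)

/-- The `C^m(ℝ × K)` norm in the variables `(t,x)`:
`∑_{|γ₀|+|γ| ≤ m} sup_{t ∈ ℝ, x ∈ K} |∂_t^{γ₀} D_x^γ g(t,x)|`. -/
def CnormTXOn (m : ℕ) (K : Set (Euc n)) (g : ℝ → Euc n → ℝ) : ℝ :=
  ∑ p ∈ midxTX n m, ⨆ t : ℝ, ⨆ x ∈ K, ‖mderivTX (p.1 : ℕ) (fun i => (p.2 i : ℕ)) g t x‖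
lemma inner_shift {ω : Euc n} (hω : ‖ω‖ = 1) (x : Euc n) (τ : ℝ) :
    (inner ℝ (x + τ • ω) ω : ℝ) = (inner ℝ x ω : ℝ) + τ := by
  rw [inner_add_left, real_inner_smul_left, real_inner_self_eq_norm_mul_norm, hω]; ring

lemma perp_shift {ω : Euc n} (hω : ‖ω‖ = 1) (x : Euc n) (τ : ℝ) :
    (x + τ • ω) - (inner ℝ (x + τ • ω) ω : ℝ) • ω = x - (inner ℝ x ω : ℝ) • ω := by
  rw [inner_shift hω, add_smul]
  module

lemma perp_norm_le {ω : Euc n} (hω : ‖ω‖ = 1) (y : Euc n) :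
    ‖y - (inner ℝ y ω : ℝ) • ω‖ ≤ ‖y‖ := by
  set c : ℝ := inner ℝ y ω with hc
  have hp : (inner ℝ (y - c • ω) ω : ℝ) = 0 := by
    rw [inner_sub_left, real_inner_smul_left, real_inner_self_eq_norm_mul_norm, hω, ← hc]; ring
  have hsq : ‖y‖ ^ 2 = ‖y - c • ω‖ ^ 2 + c ^ 2 := by
    calc ‖y‖ ^ 2 = ‖(y - c • ω) + c • ω‖ ^ 2 := by rw [sub_add_cancel]
      _ = ‖y - c • ω‖ ^ 2 + 2 * (inner ℝ (y - c • ω) (c • ω) : ℝ) + ‖c • ω‖ ^ 2 :=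
          norm_add_sq_real _ _
      _ = ‖y - c • ω‖ ^ 2 + c ^ 2 := by
          rw [real_inner_smul_right, hp, norm_smul, hω]
          simp [sq_abs]
  nlinarith [norm_nonneg (y - c • ω), norm_nonneg y]

lemma pd_eq_zero_on {V : Set (Euc n)} (hV : IsOpen V) {f : Euc n → ℝ}
    (hf : ∀ y ∈ V, f y = 0) (i : Fin n) : ∀ y ∈ V, pd i f y = 0 := by
  intro y hy
  have h : f =ᶠ[nhds y] (fun _ => (0 : ℝ)) :=
    Filter.eventuallyEq_of_mem (hV.mem_nhds hy) hf
  unfold pd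
  rw [h.fderiv_eq]
  simp

lemma waveOp_eq_zero_on {V : Set (Euc n)} (hV : IsOpen V)
    (q : ℝ → Euc n → ℝ) (a : ℝ → Euc n → Euc n → ℝ) (ω : Euc n)
    (ha : ∀ t, ∀ y ∈ V, a t y ω = 0) :
    ∀ t, ∀ y ∈ V, waveOp q a t y ω = 0 := by
  intro t y hy
  have h1 : (fun s => a s y ω) = fun _ => (0 : ℝ) := funext fun s => ha s y hy
  have h2 : ∀ i : Fin n, pd i (pd i (fun z => a t z ω)) y = 0 := fun i =>
    pd_eq_zero_on hV (pd_eq_zero_on hV (fun z hz => ha t z hz) i) i y hy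
  unfold waveOp
  rw [h1, ha t y hy, Finset.sum_eq_zero fun i _ => h2 i]
  simp [iteratedDeriv_succ]

/-- support property of the amplitudes `a_j`, from [MR1004174]:
`a_j(t,x,ω) = 0` whenever `x·ω < -ρ`, and also whenever `|x - (x·ω)ω| > ρ`. -/
theorem stmt7 (n : ℕ) (hn : 1 ≤ n) (ρ : ℝ) (hρ : 0 < ρ)
    (q : ℝ → Euc n → ℝ)
    (hq : ContDiff ℝ (⊤ : ℕ∞) (fun p : ℝ × Euc n => q p.1 p.2))
    (hsupp : ∀ (t : ℝ) (x : Euc n), x ∉ Metric.closedBall (0 : Euc n) ρ → q t x = 0)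
    (hbdd : ∀ (γ0 : ℕ) (γ : Fin n → ℕ), ∃ B : ℝ, ∀ (t : ℝ) (x : Euc n),
      ‖mderivTX γ0 γ q t x‖ ≤ B) :
    ∀ (j : ℕ) (t : ℝ) (ω : Metric.sphere (0 : Euc n) 1) (x : Euc n),
      (((inner ℝ x ω.1 : ℝ) < -ρ) → aSeq q j t x ω.1 = 0) ∧
      ((ρ < ‖x - (inner ℝ x ω.1 : ℝ) • ω.1‖) → aSeq q j t x ω.1 = 0) := by
  intro j
  induction j with
  | zero =>
    intro t ω x
    have hω : ‖ω.1‖ = 1 := by simpa using ω.2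
    constructor
    · intro hx
      show (-(1 : ℝ) / 2) * _ = 0
      rw [MeasureTheory.setIntegral_eq_zero_of_forall_eq_zero, mul_zero]
      intro τ hτ
      apply hsupp
      simp only [Metric.mem_closedBall, dist_zero_right, not_le]
      have hin : (inner ℝ (x + τ • ω.1) ω.1 : ℝ) = (inner ℝ x ω.1 : ℝ) + τ := inner_shift hω x τ
      have habs : |(inner ℝ (x + τ • ω.1) ω.1 : ℝ)| ≤ ‖x + τ • ω.1‖ := by
        have := abs_real_inner_le_norm (x + τ • ω.1) ω.1
        rwa [hω, mul_one] at this
      have hτ0 : τ ≤ 0 := Set.mem_Iic.mp hτ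
      have : ρ < -(inner ℝ (x + τ • ω.1) ω.1 : ℝ) := by rw [hin]; linarith
      calc ρ < -(inner ℝ (x + τ • ω.1) ω.1 : ℝ) := this
        _ ≤ |(inner ℝ (x + τ • ω.1) ω.1 : ℝ)| := neg_le_abs _
        _ ≤ ‖x + τ • ω.1‖ := habs
    · intro hx
      show (-(1 : ℝ) / 2) * _ = 0
      rw [MeasureTheory.setIntegral_eq_zero_of_forall_eq_zero, mul_zero]
      intro τ _
      apply hsupp
      simp only [Metric.mem_closedBall, dist_zero_right, not_le]
      calc ρ < ‖x - (inner ℝ x ω.1 : ℝ) • ω.1‖ := hx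
        _ = ‖(x + τ • ω.1) - (inner ℝ (x + τ • ω.1) ω.1 : ℝ) • ω.1‖ := by rw [perp_shift hω]
        _ ≤ ‖x + τ • ω.1‖ := perp_norm_le hω _
  | succ j ih =>
    intro t ω x
    have hω : ‖ω.1‖ = 1 := by simpa using ω.2
    have hcont : Continuous fun y : Euc n => (inner ℝ y ω.1 : ℝ) :=
      continuous_id.inner continuous_const
    have hV₁ : IsOpen {y : Euc n | (inner ℝ y ω.1 : ℝ) < -ρ} :=
      isOpen_lt hcont continuous_const
    have hV₂ : IsOpen {y : Euc n | ρ < ‖y - (inner ℝ y ω.1 : ℝ) • ω.1‖} :=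
      isOpen_lt continuous_const ((continuous_id.sub (hcont.smul continuous_const)).norm)
    have hw₁ : ∀ t', ∀ y ∈ {y : Euc n | (inner ℝ y ω.1 : ℝ) < -ρ},
        waveOp q (aSeq q j) t' y ω.1 = 0 :=
      waveOp_eq_zero_on hV₁ q (aSeq q j) ω.1 (fun t' y hy => (ih t' ω y).1 hy)
    have hw₂ : ∀ t', ∀ y ∈ {y : Euc n | ρ < ‖y - (inner ℝ y ω.1 : ℝ) • ω.1‖},
        waveOp q (aSeq q j) t' y ω.1 = 0 :=
      waveOp_eq_zero_on hV₂ q (aSeq q j) ω.1 (fun t' y hy => (ih t' ω y).2 hy)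
    constructor
    · intro hx
      show (-(1 : ℝ) / 2) * _ = 0
      rw [MeasureTheory.setIntegral_eq_zero_of_forall_eq_zero, mul_zero]
      intro τ hτ
      apply hw₁ (t + τ)
      have hτ0 : τ ≤ 0 := Set.mem_Iic.mp hτ
      show (inner ℝ (x + τ • ω.1) ω.1 : ℝ) < -ρ
      rw [inner_shift hω]
      linarith
    · intro hx
      show (-(1 : ℝ) / 2) * _ = 0
      rw [MeasureTheory.setIntegral_eq_zero_of_forall_eq_zero, mul_zero]
      intro τ _
      apply hw₂ (t + τ)
      show ρ < ‖(x + τ • ω.1) - (inner ℝ (x + τ • ω.1) ω.1 : ℝ) • ω.1‖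
      rw [perp_shift hω]
      exact hx

end
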